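/- The spider transition densities satisfy the Chapman–Kolmogorov equation: for s, t > 0 and points x, z on the spider, p(t+s, x, z) = Σⱼ ∫₀^∞ p(t, x, yⱼ) p(s, yⱼ, z) dyⱼ, where the sum is over the N legs. -/

import Mathlib

open Real MeasureTheory

/-- The transition density of Brownian motion on the `N`-legged spider graph. A point of the
spider is encoded as a pair (leg index, nonnegative coordinate). -/
noncomputable def spiderKernel (N : ℕ) (t : ℝ) (i : Fin N) (x : ℝ) (j : Fin N) (y : ℝ) : ℝ :=
  if i = j then
    (1 / Real.sqrt (2 * π * t)) *
      (Real.exp (-(x - y)^2 / (2*t)) - ((N - 2 : ℝ) / N) * Real.exp (-(x + y)^2 / (2*t)))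
  else
    (2 / N) * (Real.exp (-(x + y)^2 / (2*t)) / Real.sqrt (2 * π * t))


open Set

noncomputable def spiderG (t u : ℝ) : ℝ := Real.exp (-u^2 / (2*t)) / Real.sqrt (2*π*t)

lemma integrable_rexp_quadratic {b : ℝ} (hb : 0 < b) (c d : ℝ) :
    Integrable fun x : ℝ ↦ Real.exp (-b*x^2 + c*x + d) := by
  have h : ∀ x : ℝ, Real.exp (-b*x^2 + c*x + d)
      = Real.exp (-b*(x - c/(2*b))^2) * Real.exp (d + c^2/(4*b)) := by
    intro x
    rw [← Real.exp_add]
    congr 1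
    field_simp
    ring
  simp_rw [h]
  exact ((integrable_exp_neg_mul_sq hb).comp_sub_right (c/(2*b))).mul_const _

lemma integral_rexp_quadratic {b : ℝ} (hb : 0 < b) (c d : ℝ) :
    ∫ x : ℝ, Real.exp (-b*x^2 + c*x + d) = Real.sqrt (π/b) * Real.exp (d + c^2/(4*b)) := by
  have h : ∀ x : ℝ, Real.exp (-b*x^2 + c*x + d)
      = Real.exp (-b*(x - c/(2*b))^2) * Real.exp (d + c^2/(4*b)) := by
    intro x
    rw [← Real.exp_add]
    congr 1
    field_simp
    ring
  simp_rw [h, integral_mul_const, integral_sub_right_eq_self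
    (fun x : ℝ ↦ Real.exp (-b*x^2)) (c/(2*b)), integral_gaussian]

lemma spiderG_prod {t s : ℝ} (ht : 0 < t) (hs : 0 < s) (a c : ℝ) (y : ℝ) :
    spiderG t (a - y) * spiderG s (y - c) =
      Real.exp (-((t+s)/(2*t*s))*y^2 + (a/t + c/s)*y + (-a^2/(2*t) - c^2/(2*s)))
        / (Real.sqrt (2*π*t) * Real.sqrt (2*π*s)) := by
  unfold spiderG
  rw [div_mul_div_comm, ← Real.exp_add]
  congr 1
  field_simp
  ring

lemma spiderG_even (t : ℝ) (y : ℝ) : spiderG t (-y) = spiderG t y := by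
  unfold spiderG; ring_nf

lemma integrable_spiderG_prod {t s : ℝ} (ht : 0 < t) (hs : 0 < s) (a c : ℝ) :
    Integrable fun y : ℝ ↦ spiderG t (a - y) * spiderG s (y - c) := by
  simp_rw [spiderG_prod ht hs a c]
  have hb : 0 < (t+s)/(2*t*s) := by positivity
  exact (integrable_rexp_quadratic hb _ _).div_const _

lemma sqrt_helper {t s : ℝ} (ht : 0 < t) (hs : 0 < s) :
    Real.sqrt (π / ((t+s)/(2*t*s))) / (Real.sqrt (2*π*t) * Real.sqrt (2*π*s))
      = 1 / Real.sqrt (2*π*(t+s)) := by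
  rw [div_eq_div_iff (by positivity) (by positivity)]
  rw [one_mul, ← Real.sqrt_mul (by positivity), ← Real.sqrt_mul (by positivity)]
  congr 1
  field_simp

lemma spiderG_conv {t s : ℝ} (ht : 0 < t) (hs : 0 < s) (a c : ℝ) :
    ∫ y : ℝ, spiderG t (a - y) * spiderG s (y - c) = spiderG (t+s) (a - c) := by
  have hb : 0 < (t+s)/(2*t*s) := by positivity
  simp_rw [spiderG_prod ht hs a c, integral_div, integral_rexp_quadratic hb]
  unfold spiderG
  rw [mul_comm, mul_div_assoc, sqrt_helper ht hs, mul_one_div]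
  congr 1
  rw [Real.exp_eq_exp]
  field_simp
  ring

lemma spiderG_half {t s : ℝ} (ht : 0 < t) (hs : 0 < s) (a c : ℝ) :
    (∫ y in Ioi (0:ℝ), spiderG t (a - y) * spiderG s (y - c))
      + (∫ y in Ioi (0:ℝ), spiderG t (a + y) * spiderG s (y + c))
      = spiderG (t+s) (a - c) := by
  have hint := integrable_spiderG_prod ht hs a c
  have h2 : (∫ y in Ioi (0:ℝ), spiderG t (a + y) * spiderG s (y + c))
      = ∫ y in Iic (0:ℝ), spiderG t (a - y) * spiderG s (y - c) := by
    have h := integral_comp_neg_Ioi (0:ℝ) (fun y => spiderG t (a - y) * spiderG s (y - c))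
    rw [neg_zero] at h
    rw [← h]
    refine setIntegral_congr_fun measurableSet_Ioi fun y _ => ?_
    rw [show a - -y = a + y by ring, show -y - c = -(y + c) by ring, spiderG_even]
  rw [h2, add_comm, intervalIntegral.integral_Iic_add_Ioi hint.integrableOn hint.integrableOn,
    spiderG_conv ht hs]

lemma integrable_spiderG_prod_neg {t s : ℝ} (ht : 0 < t) (hs : 0 < s) (a c : ℝ) :
    Integrable fun y : ℝ ↦ spiderG t (a + y) * spiderG s (y + c) := by
  have h := (integrable_spiderG_prod ht hs a c).comp_neg
  refine h.congr (Filter.Eventually.of_forall fun y => ?_)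
  show spiderG t (a - -y) * spiderG s (-y - c) = _
  rw [show a - -y = a + y by ring, show -y - c = -(y + c) by ring, spiderG_even]

lemma spiderKernel_eq_same (N : ℕ) (t : ℝ) (i : Fin N) (x y : ℝ) :
    spiderKernel N t i x i y
      = spiderG t (x - y) - ((N - 2 : ℝ)/N) * spiderG t (x + y) := by
  unfold spiderKernel spiderG
  rw [if_pos rfl]
  ring

lemma spiderKernel_eq_diff {N : ℕ} {i j : Fin N} (h : i ≠ j) (t : ℝ) (x y : ℝ) :
    spiderKernel N t i x j y = (2/(N:ℝ)) * spiderG t (x + y) := by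
  unfold spiderKernel spiderG
  rw [if_neg h]

theorem spiderKernel_chapman_kolmogorov' (N : ℕ) (hN : 2 ≤ N)
    (s t : ℝ) (hs : 0 < s) (ht : 0 < t)
    (i : Fin N) (x : ℝ) (hx : 0 ≤ x) (k : Fin N) (z : ℝ) (hz : 0 ≤ z) :
    spiderKernel N (t + s) i x k z =
      ∑ j : Fin N, ∫ y in Set.Ioi (0:ℝ),
        spiderKernel N t i x j y * spiderKernel N s j y k z := by
  have hN0 : (N:ℝ) ≠ 0 := by positivity
  set a : ℝ := ((N:ℝ) - 2)/N with ha
  set b : ℝ := 2/(N:ℝ) with hb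
  set A : ℝ := ∫ y in Ioi (0:ℝ), spiderG t (x - y) * spiderG s (y - z) with hA
  set B : ℝ := ∫ y in Ioi (0:ℝ), spiderG t (x + y) * spiderG s (y + z) with hB
  set C : ℝ := ∫ y in Ioi (0:ℝ), spiderG t (x - y) * spiderG s (y + z) with hC
  set D : ℝ := ∫ y in Ioi (0:ℝ), spiderG t (x + y) * spiderG s (y - z) with hD
  have hAB : A + B = spiderG (t+s) (x - z) := spiderG_half ht hs x z
  have hCD : C + D = spiderG (t+s) (x + z) := by
    have h := spiderG_half ht hs x (-z)
    simp only [sub_neg_eq_add, ← sub_eq_add_neg] at h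
    rw [hC, hD]; exact h
  have key : a * a + ((N:ℝ) - 1) * (b * b) = 1 := by
    rw [ha, hb]; field_simp; ring
  have key2 : 2 * (a * b) = ((N:ℝ) - 2) * (b * b) := by
    rw [ha, hb]; field_simp
  -- integrability
  have hIA : IntegrableOn (fun y : ℝ => spiderG t (x - y) * spiderG s (y - z)) (Ioi 0) :=
    (integrable_spiderG_prod ht hs x z).integrableOn
  have hIC : IntegrableOn (fun y : ℝ => spiderG t (x - y) * spiderG s (y + z)) (Ioi 0) := by
    have := (integrable_spiderG_prod ht hs x (-z)).integrableOn (s := Ioi 0)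
    simpa only [sub_neg_eq_add] using this
  have hIB : IntegrableOn (fun y : ℝ => spiderG t (x + y) * spiderG s (y + z)) (Ioi 0) :=
    (integrable_spiderG_prod_neg ht hs x z).integrableOn
  have hID : IntegrableOn (fun y : ℝ => spiderG t (x + y) * spiderG s (y - z)) (Ioi 0) := by
    have := (integrable_spiderG_prod_neg ht hs x (-z)).integrableOn (s := Ioi 0)
    simpa only [← sub_eq_add_neg] using this
  have hIC' : IntegrableOn (fun y : ℝ => a * (spiderG t (x - y) * spiderG s (y + z))) (Ioi 0) :=
    hIC.const_mul a
  have hID' : IntegrableOn (fun y : ℝ => a * (spiderG t (x + y) * spiderG s (y - z))) (Ioi 0) :=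
    hID.const_mul a
  have hIB' : IntegrableOn (fun y : ℝ => (a*a) * (spiderG t (x + y) * spiderG s (y + z))) (Ioi 0) :=
    hIB.const_mul (a*a)
  have hICb : IntegrableOn (fun y : ℝ => b * (spiderG t (x - y) * spiderG s (y + z))) (Ioi 0) :=
    hIC.const_mul b
  have hIDb : IntegrableOn (fun y : ℝ => b * (spiderG t (x + y) * spiderG s (y - z))) (Ioi 0) :=
    hID.const_mul b
  have hIBab : IntegrableOn (fun y : ℝ => (a*b) * (spiderG t (x + y) * spiderG s (y + z))) (Ioi 0) :=
    hIB.const_mul (a*b)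
  have hsub1 : IntegrableOn (fun y : ℝ => spiderG t (x - y) * spiderG s (y - z)
      - a * (spiderG t (x - y) * spiderG s (y + z))) (Ioi 0) := hIA.sub hIC'
  have hsub2 : IntegrableOn (fun y : ℝ => a * (spiderG t (x + y) * spiderG s (y - z))
      - (a*a) * (spiderG t (x + y) * spiderG s (y + z))) (Ioi 0) := hID'.sub hIB'
  -- value of a generic off-diagonal term
  have hgen : ∀ j : Fin N, i ≠ j → j ≠ k →
      (∫ y in Ioi (0:ℝ), spiderKernel N t i x j y * spiderKernel N s j y k z)
        = b * b * B := by
    intro j hij hjk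
    rw [hB, ← integral_const_mul]
    refine setIntegral_congr_fun measurableSet_Ioi fun y _ => ?_
    rw [spiderKernel_eq_diff hij, spiderKernel_eq_diff hjk, ← hb]
    ring
  clear_value a b A B C D
  by_cases hik : i = k
  · subst hik
    rw [spiderKernel_eq_same, ← ha, ← Finset.add_sum_erase _ _ (Finset.mem_univ i)]
    have hdiag : (∫ y in Ioi (0:ℝ), spiderKernel N t i x i y * spiderKernel N s i y i z)
        = (A - a * C) - (a * D - a * a * B) := by
      have e1 : ∀ y ∈ Ioi (0:ℝ), spiderKernel N t i x i y * spiderKernel N s i y i z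
          = (spiderG t (x - y) * spiderG s (y - z)
              - a * (spiderG t (x - y) * spiderG s (y + z)))
            - (a * (spiderG t (x + y) * spiderG s (y - z))
              - (a * a) * (spiderG t (x + y) * spiderG s (y + z))) := by
        intro y _
        rw [spiderKernel_eq_same, spiderKernel_eq_same, ← ha]
        ring
      rw [setIntegral_congr_fun measurableSet_Ioi e1,
        integral_sub hsub1 hsub2, integral_sub hIA hIC', integral_sub hID' hIB',
        integral_const_mul, integral_const_mul, integral_const_mul, hA, hB, hC, hD]
    have hrest : ∑ j ∈ Finset.univ.erase i,
        (∫ y in Ioi (0:ℝ), spiderKernel N t i x j y * spiderKernel N s j y i z)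
          = ((N:ℝ) - 1) * (b * b * B) := by
      rw [Finset.sum_congr rfl fun j hj => hgen j (Ne.symm (Finset.ne_of_mem_erase hj))
        (Finset.ne_of_mem_erase hj), Finset.sum_const,
        Finset.card_erase_of_mem (Finset.mem_univ i),
        Finset.card_univ, Fintype.card_fin, nsmul_eq_mul, Nat.cast_sub (by omega), Nat.cast_one]
    rw [hdiag, hrest, ← hAB, ← hCD]
    linear_combination (-B) * key
  · rw [spiderKernel_eq_diff hik, ← hb, ← Finset.add_sum_erase _ _ (Finset.mem_univ i),
      ← Finset.add_sum_erase _ _ (Finset.mem_erase.2 ⟨Ne.symm hik, Finset.mem_univ k⟩)]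
    have hfi : (∫ y in Ioi (0:ℝ), spiderKernel N t i x i y * spiderKernel N s i y k z)
        = b * C - a * b * B := by
      have e1 : ∀ y ∈ Ioi (0:ℝ), spiderKernel N t i x i y * spiderKernel N s i y k z
          = b * (spiderG t (x - y) * spiderG s (y + z))
            - (a * b) * (spiderG t (x + y) * spiderG s (y + z)) := by
        intro y _
        rw [spiderKernel_eq_same, spiderKernel_eq_diff hik, ← ha, ← hb]
        ring
      rw [setIntegral_congr_fun measurableSet_Ioi e1, integral_sub hICb hIBab,
        integral_const_mul, integral_const_mul, hB, hC]
    have hfk : (∫ y in Ioi (0:ℝ), spiderKernel N t i x k y * spiderKernel N s k y k z)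
        = b * D - a * b * B := by
      have e1 : ∀ y ∈ Ioi (0:ℝ), spiderKernel N t i x k y * spiderKernel N s k y k z
          = b * (spiderG t (x + y) * spiderG s (y - z))
            - (a * b) * (spiderG t (x + y) * spiderG s (y + z)) := by
        intro y _
        rw [spiderKernel_eq_diff hik, spiderKernel_eq_same, ← ha, ← hb]
        ring
      rw [setIntegral_congr_fun measurableSet_Ioi e1, integral_sub hIDb hIBab,
        integral_const_mul, integral_const_mul, hB, hD]
    have hrest : ∑ j ∈ (Finset.univ.erase i).erase k,
        (∫ y in Ioi (0:ℝ), spiderKernel N t i x j y * spiderKernel N s j y k z)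
          = ((N:ℝ) - 2) * (b * b * B) := by
      rw [Finset.sum_congr rfl fun j hj => hgen j
          (Ne.symm (Finset.ne_of_mem_erase (Finset.mem_of_mem_erase hj)))
          (Finset.ne_of_mem_erase hj),
        Finset.sum_const,
        Finset.card_erase_of_mem (Finset.mem_erase.2 ⟨Ne.symm hik, Finset.mem_univ k⟩),
        Finset.card_erase_of_mem (Finset.mem_univ i), Finset.card_univ, Fintype.card_fin,
        nsmul_eq_mul]
      congr 1
      have h2 : N - 1 - 1 = N - 2 := by omega
      rw [h2, Nat.cast_sub hN]
      norm_num
    rw [hfi, hfk, hrest, ← hCD]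
    linear_combination B * key2

/-- The spider transition densities satisfy the Chapman–Kolmogorov equation. -/
theorem spiderKernel_chapman_kolmogorov (N : ℕ) (hN : 2 ≤ N)
    (s t : ℝ) (hs : 0 < s) (ht : 0 < t)
    (i : Fin N) (x : ℝ) (hx : 0 ≤ x) (k : Fin N) (z : ℝ) (hz : 0 ≤ z) :
    spiderKernel N (t + s) i x k z =
      ∑ j : Fin N, ∫ y in Set.Ioi (0:ℝ),
        spiderKernel N t i x j y * spiderKernel N s j y k z := by
  exact spiderKernel_chapman_kolmogorov' N hN s t hs ht i x hx k z hz
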